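/- The only Fibonacci number expressible as 5 times a nonzero perfect square is F_5 = 5; that is, if F_n = 5x^2 for natural numbers n and x with x ≥ 1, then n = 5 and x = 1. -/

import Mathlib

open Nat

def luc : ℕ → ℕ
  | 0 => 2
  | 1 => 1
  | n + 2 => luc n + luc (n + 1)

lemma luc_add_two (n : ℕ) : luc (n + 2) = luc n + luc (n + 1) := rfl

lemma luc_add_fib : ∀ n, luc n + fib n = 2 * fib (n + 1)
  | 0 => rfl
  | 1 => rfl
  | n + 2 => by
    have h1 := luc_add_fib n
    have h2 := luc_add_fib (n + 1)
    rw [luc_add_two, fib_add_two, fib_add_two]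
    omega

lemma luc_add : ∀ m n, luc (m + n + 1) = luc m * fib n + luc (m + 1) * fib (n + 1)
  | m, 0 => by simp
  | m, 1 => by simp [fib_one, luc_add_two, fib_add_two]
  | m, n + 2 => by
    have h1 := luc_add m n
    have h2 := luc_add m (n + 1)
    have e1 : m + (n + 2) + 1 = (m + n + 1) + 2 := by ring
    rw [e1, luc_add_two]
    have e2 : m + n + 1 + 1 = m + (n + 1) + 1 := by ring
    rw [e2, h2, h1, fib_add_two (n := n + 1), fib_add_two (n := n)]
    ring

-- sanity
example : luc 6 = 18 := rfl
example : luc 10 = 123 := rfl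
lemma mod_period {f : ℕ → ℕ} {M s : ℕ} (h : ∀ n, f (n + s) % M = f n % M) (n : ℕ) :
    f n % M = f (n % s) % M := by
  conv_lhs => rw [← Nat.div_add_mod n s]
  generalize n / s = q
  induction q with
  | zero => simp
  | succ q ih =>
      have e : s * (q + 1) + n % s = (s * q + n % s) + s := by ring
      rw [e, h, ih]

section periods
variable (f : ℕ → ℕ)

lemma period_gen (hrec : ∀ n, f (n + 2) = f n + f (n + 1)) (M s : ℕ)
    (h0 : f s % M = f 0 % M) (h1 : f (s + 1) % M = f 1 % M) :
    ∀ n, f (n + s) % M = f n % M := by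
  intro n
  induction n using Nat.strong_induction_on with
  | _ n ih =>
    match n with
    | 0 => simpa using h0
    | 1 => simpa [Nat.add_comm] using h1
    | n + 2 =>
      have i1 := ih n (by omega)
      have i2 := ih (n + 1) (by omega)
      have e : n + 2 + s = (n + s) + 2 := by omega
      have e2 : n + 1 + s = n + s + 1 := by omega
      rw [e, hrec, hrec n, ← e2]
      exact Nat.ModEq.add i1 i2

lemma fib_rec : ∀ n, fib (n + 2) = fib n + fib (n + 1) := fun n => fib_add_two
lemma luc_rec : ∀ n, luc (n + 2) = luc n + luc (n + 1) := fun n => rfl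

end periods

lemma fib_p2 : ∀ n, fib (n + 3) % 2 = fib n % 2 := period_gen fib fib_rec 2 3 rfl rfl
lemma fib_p3 : ∀ n, fib (n + 8) % 3 = fib n % 3 := period_gen fib fib_rec 3 8 rfl rfl
lemma fib_p5 : ∀ n, fib (n + 20) % 5 = fib n % 5 := period_gen fib fib_rec 5 20 rfl rfl
lemma luc_p2 : ∀ n, luc (n + 3) % 2 = luc n % 2 := period_gen luc luc_rec 2 3 rfl rfl
lemma luc_p4 : ∀ n, luc (n + 6) % 4 = luc n % 4 := period_gen luc luc_rec 4 6 rfl rfl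
lemma luc_p3 : ∀ n, luc (n + 8) % 3 = luc n % 3 := period_gen luc luc_rec 3 8 rfl rfl
lemma luc_p5 : ∀ n, luc (n + 4) % 5 = luc n % 5 := period_gen luc luc_rec 5 4 rfl rfl

lemma fib_even_iff (n : ℕ) : fib n % 2 = 0 ↔ n % 3 = 0 := by
  rw [mod_period fib_p2]
  have h : n % 3 < 3 := Nat.mod_lt _ (by norm_num)
  interval_cases h' : (n % 3) <;> decide

lemma luc_even_iff (n : ℕ) : luc n % 2 = 0 ↔ n % 3 = 0 := by
  rw [mod_period luc_p2]
  have h : n % 3 < 3 := Nat.mod_lt _ (by norm_num)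
  interval_cases h' : (n % 3) <;> decide

lemma luc_mod4_eq3 (n : ℕ) (h2 : n % 2 = 0) (h3 : n % 3 ≠ 0) : luc n % 4 = 3 := by
  rw [mod_period luc_p4]
  have h : n % 6 = 2 ∨ n % 6 = 4 := by omega
  rcases h with h | h <;> rw [h] <;> rfl

lemma luc_mod3_iff (n : ℕ) : luc n % 3 = 0 ↔ (n % 8 = 2 ∨ n % 8 = 6) := by
  rw [mod_period luc_p3]
  have h : n % 8 < 8 := Nat.mod_lt _ (by norm_num)
  interval_cases h' : (n % 8) <;> decide

lemma luc_mod5 (n : ℕ) : luc n % 5 ≠ 0 := by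
  rw [mod_period luc_p5]
  have h : n % 4 < 4 := Nat.mod_lt _ (by norm_num)
  interval_cases h' : (n % 4) <;> decide

lemma five_dvd_fib (n : ℕ) (h : 5 ∣ fib n) : 5 ∣ n := by
  rw [Nat.dvd_iff_mod_eq_zero, mod_period fib_p5] at h
  have h1 : n % 20 < 20 := Nat.mod_lt _ (by norm_num)
  have h2 : n % 20 % 5 = n % 5 := Nat.mod_mod_of_dvd n (by norm_num)
  have h5 : n % 20 % 5 = 0 := by
    interval_cases h' : (n % 20) <;> first | rfl | exact absurd h (by decide)
  omega

lemma fib_mod3_seven (n : ℕ) (h : n % 8 = 7) : fib n % 3 = 1 := by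
  rw [mod_period fib_p3, h]; rfl
section Zident

lemma lucZ_rec (k : ℕ) : (luc (k+2) : ℤ) = luc k + luc (k+1) := by
  rw [luc_add_two]; push_cast; ring

lemma fibZ_rec (k : ℕ) : (fib (k+2) : ℤ) = fib k + fib (k+1) := by
  rw [fib_add_two]; push_cast; ring

lemma luc_fibZ (n : ℕ) : (luc n : ℤ) + fib n = 2 * fib (n + 1) := by
  exact_mod_cast luc_add_fib n

lemma cassiniL : ∀ k, ((luc k : ℤ))^2 + luc k * luc (k+1) - (luc (k+1))^2 = 5 * (-1)^k := by
  intro k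
  induction k with
  | zero => norm_num [luc]
  | succ k ih =>
      rw [show k+1+1 = k+2 from rfl, lucZ_rec]
      linear_combination (-1 : ℤ) * ih

lemma I5F : ∀ k, 5 * (fib k : ℤ) = 2 * luc (k+1) - luc k
  | 0 => by norm_num [luc]
  | 1 => by norm_num [luc]
  | k + 2 => by
      have i1 := I5F k
      have i2 := I5F (k + 1)
      rw [show k+1+1 = k+2 from rfl] at i2
      rw [fibZ_rec, show k+2+1 = (k+1)+2 from rfl, lucZ_rec (k+1)]
      linear_combination i1 + i2 + lucZ_rec k

lemma M3 (k : ℕ) : ((luc k : ℤ))^2 - 5 * (fib k)^2 = 4 * (-1)^k := by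
  have hc := cassiniL k
  have h5 := I5F k
  apply mul_left_cancel₀ (a := (5:ℤ)) (by norm_num)
  linear_combination 4 * hc + ((luc k : ℤ) - 2 * luc (k+1) - 5 * fib k) * h5

lemma crossL : ∀ k, (luc k : ℤ) * luc (k+1) - 5 * fib k * fib (k+1) = 2 * (-1)^k := by
  intro k
  induction k with
  | zero => norm_num [luc]
  | succ k ih =>
      have hm := M3 (k+1)
      rw [show k+1+1 = k+2 from rfl, lucZ_rec, fibZ_rec]
      linear_combination ih + hm

lemma IW : ∀ k, (fib (k+1) : ℤ) * luc k - (luc (k+1) : ℤ) * fib k = 2 * (-1)^k := by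
  intro k
  induction k with
  | zero => norm_num [luc]
  | succ k ih =>
      rw [show k+1+1 = k+2 from rfl, lucZ_rec, fibZ_rec]
      linear_combination (-1 : ℤ) * ih

lemma IS (k : ℕ) : ∀ m, (fib (m+k) : ℤ) * luc k - (luc (m+k) : ℤ) * fib k = (-1)^k * (2 * fib m)
  | 0 => by simp [Nat.zero_add]; ring
  | 1 => by
      have := IW k
      rw [show 1 + k = k + 1 from by omega]
      push_cast [fib_one]
      linear_combination this
  | m + 2 => by
      have i1 := IS k m
      have i2 := IS k (m + 1)
      rw [show m+2+k = (m+k)+2 from by omega, fibZ_rec, lucZ_rec, fibZ_rec m,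
          show m+k+1 = m+1+k from by omega]
      linear_combination i1 + i2

lemma ISL (k : ℕ) : ∀ m, (luc (m+k) : ℤ) * luc k - 5 * (fib (m+k) : ℤ) * fib k = (-1)^k * (2 * luc m)
  | 0 => by
      have := M3 k
      simp only [Nat.zero_add]
      push_cast [show luc 0 = 2 from rfl]
      linear_combination this
  | 1 => by
      have := crossL k
      rw [show 1 + k = k + 1 from by omega]
      push_cast [show luc 1 = 1 from rfl]
      linear_combination this
  | m + 2 => by
      have i1 := ISL k m
      have i2 := ISL k (m + 1)
      rw [show m+2+k = (m+k)+2 from by omega, fibZ_rec, lucZ_rec, lucZ_rec m,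
          show m+k+1 = m+1+k from by omega]
      linear_combination i1 + i2

lemma A1 (a : ℕ) : ∀ b, 2 * (fib (a+b) : ℤ) = fib a * luc b + luc a * fib b
  | 0 => by simp [show luc 0 = 2 from rfl]; ring
  | 1 => by
      have := luc_fibZ a
      push_cast [show luc 1 = 1 from rfl, fib_one]
      linear_combination -this
  | b + 2 => by
      have i1 := A1 a b
      have i2 := A1 a (b + 1)
      rw [show a+(b+2) = (a+b)+2 from by omega, fibZ_rec, lucZ_rec, fibZ_rec b,
          show a+b+1 = a+(b+1) from by omega]
      linear_combination i1 + i2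

lemma A2 (a : ℕ) : ∀ b, 2 * (luc (a+b) : ℤ) = luc a * luc b + 5 * fib a * fib b
  | 0 => by simp [show luc 0 = 2 from rfl]; ring
  | 1 => by
      have := I5F a
      push_cast [show luc 1 = 1 from rfl, fib_one]
      linear_combination -this
  | b + 2 => by
      have i1 := A2 a b
      have i2 := A2 a (b + 1)
      rw [show a+(b+2) = (a+b)+2 from by omega, lucZ_rec, lucZ_rec b, fibZ_rec b,
          show a+b+1 = a+(b+1) from by omega]
      linear_combination i1 + i2

lemma I1 (m k : ℕ) : (fib (m+2*k) : ℤ) + (-1)^k * fib m = fib (m+k) * luc k := by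
  have h1 := A1 (m+k) k
  have h2 := IS k m
  apply mul_left_cancel₀ (a := (2:ℤ)) (by norm_num)
  rw [show m+k+k = m+2*k from by omega] at h1
  linear_combination h1 - h2

lemma I2 (m k : ℕ) : (luc (m+2*k) : ℤ) + (-1)^k * luc m = luc (m+k) * luc k := by
  have h1 := A2 (m+k) k
  have h2 := ISL k m
  apply mul_left_cancel₀ (a := (2:ℤ)) (by norm_num)
  rw [show m+k+k = m+2*k from by omega] at h1
  linear_combination h1 - h2

lemma fib_two_mulZ (k : ℕ) : (fib (2*k) : ℤ) = fib k * luc k := by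
  have h1 := A1 k k
  apply mul_left_cancel₀ (a := (2:ℤ)) (by norm_num)
  rw [show k+k = 2*k from by omega] at h1
  linear_combination h1

lemma fib_two_mul_luc (k : ℕ) : fib (2*k) = fib k * luc k := by
  have := fib_two_mulZ k
  exact_mod_cast this

lemma luc_two_mulZ (k : ℕ) : (luc (2*k) : ℤ) = (luc k)^2 - 2 * (-1)^k := by
  have h1 := A2 k k
  have h2 := M3 k
  apply mul_left_cancel₀ (a := (2:ℤ)) (by norm_num)
  rw [show k+k = 2*k from by omega] at h1
  linear_combination h1 - h2

lemma luc_three_mulZ (k : ℕ) : (luc (3*k) : ℤ) = (luc k)^3 - 3 * (-1)^k * luc k := by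
  have h1 := A2 (2*k) k
  have h2 := luc_two_mulZ k
  have h3 := fib_two_mulZ k
  have h4 := M3 k
  apply mul_left_cancel₀ (a := (2:ℤ)) (by norm_num)
  rw [show 2*k+k = 3*k from by omega] at h1
  linear_combination h1 + (luc k : ℤ) * h2 + 5 * (fib k : ℤ) * h3 - (luc k : ℤ) * h4

end Zident
section Desc

lemma neg_one_pow_even {k : ℕ} (hk : k % 2 = 0) : ((-1 : ℤ))^k = 1 :=
  Even.neg_one_pow (Nat.even_iff.mpr hk)

lemma neg_one_pow_odd {k : ℕ} (hk : k % 2 = 1) : ((-1 : ℤ))^k = -1 :=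
  Odd.neg_one_pow (Nat.odd_iff.mpr hk)

lemma stepF {k : ℕ} (hk : k % 2 = 0) (m : ℕ) :
    (fib (m + 2*k) : ℤ) ≡ -(fib m) [ZMOD (luc k)] := by
  have h := I1 m k
  rw [neg_one_pow_even hk, one_mul] at h
  have hd : (-(fib m : ℤ)) - fib (m + 2*k) = (luc k) * (-(fib (m+k))) := by linarith
  exact Int.modEq_iff_dvd.mpr ⟨-(fib (m+k) : ℤ), hd⟩

lemma stepL {k : ℕ} (hk : k % 2 = 0) (m : ℕ) :
    (luc (m + 2*k) : ℤ) ≡ -(luc m) [ZMOD (luc k)] := by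
  have h := I2 m k
  rw [neg_one_pow_even hk, one_mul] at h
  have hd : (-(luc m : ℤ)) - luc (m + 2*k) = (luc k) * (-(luc (m+k))) := by linarith
  exact Int.modEq_iff_dvd.mpr ⟨-(luc (m+k) : ℤ), hd⟩

lemma iterF {k : ℕ} (hk : k % 2 = 0) : ∀ t m,
    (fib (m + 2*k*t) : ℤ) ≡ (-1)^t * fib m [ZMOD (luc k)] := by
  intro t
  induction t with
  | zero => intro m; simp
  | succ t ih =>
      intro m
      have e : m + 2*k*(t+1) = (m + 2*k*t) + 2*k := by ring
      rw [e]
      calc (fib (m + 2*k*t + 2*k) : ℤ)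
          ≡ -(fib (m + 2*k*t)) [ZMOD (luc k)] := stepF hk _
        _ ≡ -((-1)^t * fib m) [ZMOD (luc k)] := (ih m).neg
        _ = (-1)^(t+1) * fib m := by ring

lemma iterL {k : ℕ} (hk : k % 2 = 0) : ∀ t m,
    (luc (m + 2*k*t) : ℤ) ≡ (-1)^t * luc m [ZMOD (luc k)] := by
  intro t
  induction t with
  | zero => intro m; simp
  | succ t ih =>
      intro m
      have e : m + 2*k*(t+1) = (m + 2*k*t) + 2*k := by ring
      rw [e]
      calc (luc (m + 2*k*t + 2*k) : ℤ)
          ≡ -(luc (m + 2*k*t)) [ZMOD (luc k)] := stepL hk _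
        _ ≡ -((-1)^t * luc m) [ZMOD (luc k)] := (ih m).neg
        _ = (-1)^(t+1) * luc m := by ring

lemma luc_coprime_four {k : ℕ} (hodd : luc k % 2 = 1) : IsCoprime ((luc k : ℤ)) (4 : ℤ) := by
  rw [Int.isCoprime_iff_gcd_eq_one]
  have h2 : Nat.Coprime (luc k) 2 :=
    Nat.coprime_comm.mp ((Nat.prime_two.coprime_iff_not_dvd).mpr (by omega))
  have h4 : Nat.Coprime (luc k) 4 := by
    have := Nat.Coprime.pow_right 2 h2
    norm_num at this
    exact this
  have : Int.gcd ((luc k : ℤ)) ((4:ℕ) : ℤ) = Nat.gcd (luc k) 4 := Int.gcd_natCast_natCast _ _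
  norm_num at this
  rw [this]
  exact h4


lemma reflF {k : ℕ} (hk : k % 2 = 0) (hodd : luc k % 2 = 1) {j : ℕ} (hj : j ≤ 2*k) :
    (fib (2*k - j) : ℤ) ≡ (-1)^j * fib j [ZMOD (luc k)] := by
  set i := 2*k - j with hi
  have hij : i + j = 2*k := by omega
  have h1 := A1 i j
  rw [hij, fib_two_mulZ] at h1
  have h2 := A2 i j
  rw [hij, luc_two_mulZ, neg_one_pow_even hk] at h2
  have hm := M3 j
  set s : ℤ := (-1)^j with hs
  have hss : s * s = 1 := by
    rcases Nat.even_or_odd j with he | he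
    · rw [hs, Even.neg_one_pow he]; ring
    · rw [hs, Odd.neg_one_pow he]; ring
  have d1 : (luc k : ℤ) ∣ ((fib i : ℤ) * luc j + luc i * fib j) := ⟨2 * fib k, by linarith⟩
  have d2 : (luc k : ℤ) ∣ ((luc i : ℤ) * luc j + 5 * fib i * fib j + 4) := ⟨2 * luc k, by linarith⟩
  have d3 : (luc k : ℤ) ∣ ((luc j : ℤ) * ((fib i : ℤ) * luc j + luc i * fib j)
      - (fib j : ℤ) * ((luc i : ℤ) * luc j + 5 * fib i * fib j + 4)) :=
    Dvd.dvd.sub (d1.mul_left _) (d2.mul_left _)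
  have e3 : (luc j : ℤ) * ((fib i : ℤ) * luc j + luc i * fib j)
      - (fib j : ℤ) * ((luc i : ℤ) * luc j + 5 * fib i * fib j + 4)
      = 4 * (s * fib i - fib j) := by
    rw [hs]; linear_combination (fib i : ℤ) * hm
  rw [e3] at d3
  have cop := luc_coprime_four hodd
  have d4 : (luc k : ℤ) ∣ (s * fib i - fib j) := cop.dvd_of_dvd_mul_left d3
  have d5 : (luc k : ℤ) ∣ (s * fib j - fib i) := by
    have h := d4.mul_left s
    have e : s * (s * (fib i : ℤ) - fib j) = -(s * fib j - fib i) := by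
      linear_combination (fib i : ℤ) * hss
    rw [e] at h
    exact dvd_neg.mp h
  exact Int.modEq_iff_dvd.mpr d5

lemma reflL {k : ℕ} (hk : k % 2 = 0) (hodd : luc k % 2 = 1) {j : ℕ} (hj : j ≤ 2*k) :
    (luc (2*k - j) : ℤ) ≡ -((-1)^j * luc j) [ZMOD (luc k)] := by
  set i := 2*k - j with hi
  have hij : i + j = 2*k := by omega
  have h1 := A1 i j
  rw [hij, fib_two_mulZ] at h1
  have h2 := A2 i j
  rw [hij, luc_two_mulZ, neg_one_pow_even hk] at h2
  have hm := M3 j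
  set s : ℤ := (-1)^j with hs
  have hss : s * s = 1 := by
    rcases Nat.even_or_odd j with he | he
    · rw [hs, Even.neg_one_pow he]; ring
    · rw [hs, Odd.neg_one_pow he]; ring
  have d1 : (luc k : ℤ) ∣ ((fib i : ℤ) * luc j + luc i * fib j) := ⟨2 * fib k, by linarith⟩
  have d2 : (luc k : ℤ) ∣ ((luc i : ℤ) * luc j + 5 * fib i * fib j + 4) := ⟨2 * luc k, by linarith⟩
  have d3 : (luc k : ℤ) ∣ ((5 * fib j : ℤ) * ((fib i : ℤ) * luc j + luc i * fib j)
      - (luc j : ℤ) * ((luc i : ℤ) * luc j + 5 * fib i * fib j + 4)) :=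
    Dvd.dvd.sub (d1.mul_left _) (d2.mul_left _)
  have e3 : (5 * fib j : ℤ) * ((fib i : ℤ) * luc j + luc i * fib j)
      - (luc j : ℤ) * ((luc i : ℤ) * luc j + 5 * fib i * fib j + 4)
      = 4 * (-(s * luc i) - luc j) := by
    rw [hs]; linear_combination (-(luc i : ℤ)) * hm
  rw [e3] at d3
  have cop := luc_coprime_four hodd
  have d4 : (luc k : ℤ) ∣ (-(s * luc i) - luc j) := cop.dvd_of_dvd_mul_left d3
  have d5 : (luc k : ℤ) ∣ (-(s * luc j) - luc i) := by
    have h := d4.mul_left s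
    have e : s * (-(s * (luc i : ℤ)) - luc j) = -(s * luc j) - (luc i : ℤ) := by
      linear_combination (-(luc i : ℤ)) * hss
    rw [e] at h
    exact h
  exact Int.modEq_iff_dvd.mpr d5

end Desc
section NT

lemma exists_prime_4k3 : ∀ N : ℕ, N % 4 = 3 → ∃ p, p.Prime ∧ p ∣ N ∧ p % 4 = 3 := by
  intro N
  induction N using Nat.strong_induction_on with
  | _ N ih =>
    intro hN
    have h1 : N ≠ 1 := by omega
    have h0 : N ≠ 0 := by omega
    set p := N.minFac with hpdef
    have hp : p.Prime := Nat.minFac_prime h1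
    have hpd : p ∣ N := Nat.minFac_dvd N
    by_cases h3 : p % 4 = 3
    · exact ⟨p, hp, hpd, h3⟩
    · have hNodd : N % 2 = 1 := by omega
      have hp2 : p % 2 = 1 := by
        have := Nat.odd_iff.mp (hp.odd_of_ne_two (by
          rintro h2
          rw [h2] at hpd
          omega))
        exact this
      have hp41 : p % 4 = 1 := by omega
      obtain ⟨M, hM⟩ := hpd
      have hmm : N % 4 = (p % 4) * (M % 4) % 4 := by
        conv_lhs => rw [hM]
        rw [Nat.mul_mod]
      have hM4 : M % 4 = 3 := by rw [hp41] at hmm; omega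
      have hplb : 2 ≤ p := hp.two_le
      have hMlt : M < N := by
        have h2 : 2 * M ≤ p * M := Nat.mul_le_mul_right M hplb
        omega
      obtain ⟨q, hq1, hq2, hq3⟩ := ih M hMlt hM4
      exact ⟨q, hq1, hq2.trans ⟨p, by rw [hM, mul_comm]⟩, hq3⟩

lemma no_sq_dvd {L c d : ℕ} (y : ℤ) (hL4 : L % 4 = 3) (hc : Nat.Coprime c L)
    (hd : Nat.Coprime d L) : ¬ ((L : ℤ) ∣ (c : ℤ) * (y^2 + (d:ℤ)^2)) := by
  intro hdvd
  obtain ⟨p, hp, hpL, hp4⟩ := exists_prime_4k3 L hL4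
  haveI : Fact p.Prime := ⟨hp⟩
  have hpc : ¬ (p ∣ c) := by
    intro h
    have hg : p ∣ Nat.gcd c L := Nat.dvd_gcd h hpL
    rw [hc] at hg
    exact hp.ne_one (Nat.dvd_one.mp hg)
  have hpd2 : ¬ (p ∣ d) := by
    intro h
    have hg : p ∣ Nat.gcd d L := Nat.dvd_gcd h hpL
    rw [hd] at hg
    exact hp.ne_one (Nat.dvd_one.mp hg)
  have hpz : (p:ℤ) ∣ (c : ℤ) * (y^2 + (d:ℤ)^2) := (Int.natCast_dvd_natCast.mpr hpL).trans hdvd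
  have hpp : Prime (p : ℤ) := Nat.prime_iff_prime_int.mp hp
  have h2 : (p:ℤ) ∣ (y^2 + (d:ℤ)^2) := by
    rcases hpp.dvd_mul.mp hpz with h | h
    · exact absurd (Int.natCast_dvd_natCast.mp h) hpc
    · exact h
  have h3 : ((y : ZMod p))^2 + (d : ZMod p)^2 = 0 := by
    have := (ZMod.intCast_zmod_eq_zero_iff_dvd (y^2 + (d:ℤ)^2) p).mpr h2
    push_cast at this
    exact this
  have hdz : (d : ZMod p) ≠ 0 := fun h => hpd2 ((ZMod.natCast_eq_zero_iff d p).mp h)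
  have hsq : IsSquare (-1 : ZMod p) := by
    refine ⟨(y : ZMod p) * (d : ZMod p)⁻¹, ?_⟩
    have hdinv : (d : ZMod p) * (d : ZMod p)⁻¹ = 1 := mul_inv_cancel₀ hdz
    field_simp
    linear_combination -h3
  rw [ZMod.exists_sq_eq_neg_one_iff] at hsq
  exact hsq (by omega)

lemma nat_sq_of_coprime {a b c : ℕ} (h : Nat.Coprime a b) (heq : a * b = c^2) :
    ∃ d, a = d^2 := by
  apply exists_eq_pow_of_mul_eq_pow (α := ℕ) _ heq
  rw [Nat.isUnit_iff]
  exact h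

lemma SQ5 {u v y : ℕ} (huv : Nat.Coprime u v) (h : u * v = 5 * y^2) (h5 : 5 ∣ u) :
    ∃ a b, u = 5*a^2 ∧ v = b^2 := by
  have h5v : ¬ (5 ∣ v) := by
    intro hv
    have : (5:ℕ) ∣ Nat.gcd u v := Nat.dvd_gcd h5 hv
    rw [huv] at this
    omega
  have c5v : Nat.Coprime 5 v := (Nat.Prime.coprime_iff_not_dvd (by norm_num)).mpr h5v
  have cuv : Nat.Coprime (5*u) v := Nat.Coprime.mul c5v huv
  have heq : (5*u) * v = (5*y)^2 := by rw [mul_assoc, h]; ring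
  obtain ⟨e, he⟩ := nat_sq_of_coprime cuv heq
  obtain ⟨d, hd⟩ := nat_sq_of_coprime (cuv.symm) (by rw [mul_comm] at heq; exact heq)
  have h5e : 5 ∣ e := by
    have : (5:ℕ) ∣ e^2 := ⟨u, by omega⟩
    exact (Nat.Prime.dvd_of_dvd_pow (by norm_num) this)
  obtain ⟨f, hf⟩ := h5e
  refine ⟨f, d, ?_, hd⟩
  have : 5 * u = (5*f)^2 := by rw [← hf, ← he]
  nlinarith [this]

lemma SQ2 {u v y : ℕ} (huv : Nat.Coprime u v) (h : u * v = 2 * y^2) :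
    (∃ a b, u = a^2 ∧ v = 2*b^2) ∨ (∃ a b, u = 2*a^2 ∧ v = b^2) := by
  have h2 : (2:ℕ) ∣ u * v := ⟨y^2, h⟩
  rcases (Nat.Prime.dvd_mul (by norm_num)).mp h2 with hu | hv
  · right
    obtain ⟨w, hw⟩ := hu
    have hwv : w * v = y^2 := by
      rw [hw, mul_assoc] at h
      omega
    have hcwv : Nat.Coprime w v := Nat.Coprime.coprime_dvd_left ⟨2, by rw [hw]; ring⟩ huv
    obtain ⟨a, ha⟩ := nat_sq_of_coprime hcwv hwv
    obtain ⟨b, hb⟩ := nat_sq_of_coprime hcwv.symm (by rw [mul_comm] at hwv; exact hwv)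
    exact ⟨a, b, by rw [hw, ha], hb⟩
  · left
    obtain ⟨w, hw⟩ := hv
    have hwv : u * w = y^2 := by
      rw [hw] at h
      have h2' : 2 * (u * w) = 2 * y^2 := by
        calc 2 * (u * w) = u * (2 * w) := by ring
          _ = 2 * y^2 := h
      omega
    have hcwv : Nat.Coprime u w := Nat.Coprime.coprime_dvd_right ⟨2, by rw [hw]; ring⟩ huv
    obtain ⟨a, ha⟩ := nat_sq_of_coprime hcwv hwv
    obtain ⟨b, hb⟩ := nat_sq_of_coprime hcwv.symm (by rw [mul_comm] at hwv; exact hwv)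
    exact ⟨a, b, ha, by rw [hw, hb]⟩

lemma decomp (N : ℕ) (hN : N ≠ 0) (h4 : 4 ∣ N) :
    ∃ k t, N = 2*k*t ∧ t % 2 = 1 ∧ k % 2 = 0 ∧ ¬ (3 ∣ k) ∧ (8 ∣ N → 4 ∣ k) ∧
      (k = 2 → N % 8 = 4) := by
  set a := N.factorization 2 with ha
  set M := N / 2^a with hM
  have hNM : 2^a * M = N := Nat.ordProj_mul_ordCompl_eq_self N 2
  have hModd : ¬ (2 ∣ M) := Nat.not_dvd_ordCompl Nat.prime_two hN
  have hM0 : M ≠ 0 := by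
    intro h; rw [h] at hNM; omega
  set b := M.factorization 3 with hb
  set c := M / 3^b with hc
  have hMc : 3^b * c = M := Nat.ordProj_mul_ordCompl_eq_self M 3
  have hc3 : ¬ (3 ∣ c) := Nat.not_dvd_ordCompl Nat.prime_three hM0
  have hcodd : ¬ (2 ∣ c) := by
    intro h
    exact hModd (h.trans (Nat.ordCompl_dvd M 3))
  have ha2 : 2 ≤ a := by
    rw [ha]
    have h44 : (2:ℕ)^2 ∣ N := by norm_num [h4]
    exact (Nat.Prime.pow_dvd_iff_le_factorization Nat.prime_two hN).mp h44
  clear_value a M b c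
  have epow : 2^(a-1) * 2 = 2^a := by
    rw [← pow_succ]
    congr 1
    omega
  have hodd3 : 3^b % 2 = 1 := Nat.odd_iff.mp (Odd.pow ⟨1, by norm_num⟩)
  refine ⟨2^(a-1) * c, 3^b, ?_, hodd3, ?_, ?_, ?_, ?_⟩
  · rw [← hNM, ← hMc, ← epow]
    ring
  · have hd : (2:ℕ) ∣ 2^(a-1) * c := Dvd.dvd.mul_right (dvd_pow_self 2 (by omega)) c
    omega
  · intro h3
    rcases (Nat.Prime.dvd_mul Nat.prime_three).mp h3 with h | h
    · have := Nat.Prime.dvd_of_dvd_pow (p := 3) (by norm_num) h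
      omega
    · exact hc3 h
  · intro h8
    have ha3 : 3 ≤ a := by
      rw [ha]
      have h88 : (2:ℕ)^3 ∣ N := by norm_num [h8]
      exact (Nat.Prime.pow_dvd_iff_le_factorization Nat.prime_two hN).mp h88
    have h42 : (4:ℕ) ∣ 2^(a-1) := by
      have hp : (2:ℕ)^2 ∣ 2^(a-1) := pow_dvd_pow 2 (by omega)
      norm_num at hp
      exact hp
    exact h42.mul_right c
  · intro hk2
    have hcd : c ∣ 2 := Dvd.intro_left _ hk2
    have hcle : c ≤ 2 := Nat.le_of_dvd (by norm_num) hcd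
    have hc0 : c ≠ 0 := by
      intro h; rw [h] at hMc; simp at hMc; exact hM0 hMc.symm
    have hc2 : c % 2 = 1 := by
      rcases Nat.mod_two_eq_zero_or_one c with h | h
      · exact absurd (Nat.dvd_of_mod_eq_zero h) hcodd
      · exact h
    have hc1 : c = 1 := by omega
    rw [hc1, mul_one] at hk2
    have haa : a - 1 = 1 := Nat.pow_right_injective (le_refl 2) (by simpa using hk2)
    have haa2 : a = 2 := by omega
    have hN4 : N = 4 * 3^b := by
      rw [← hNM, ← hMc, hc1, mul_one, haa2]
      norm_num
    omega

end NT
section LucSq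

lemma luc_pos : ∀ m, 1 ≤ luc m
  | 0 => by norm_num [luc]
  | 1 => by norm_num [luc]
  | m + 2 => by
      have h1 := luc_pos m
      rw [luc_add_two]
      omega

lemma luc_ge : ∀ m, 2 ≤ m → m + 1 ≤ luc m
  | 2, _ => by norm_num [luc]
  | 3, _ => by norm_num [luc]
  | (m + 4), _ => by
      have h1 := luc_ge (m + 2) (by omega)
      have h2 := luc_ge (m + 3) (by omega)
      rw [show m + 4 = (m + 2) + 2 from rfl, luc_add_two,
          show m + 2 + 1 = m + 3 from rfl]
      omega

lemma luc_eq_two {m : ℕ} (h : luc m = 2) : m = 0 := by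
  match m with
  | 0 => rfl
  | 1 => simp [luc] at h
  | m + 2 =>
      have := luc_ge (m + 2) (by omega)
      omega

lemma luc_odd {k : ℕ} (h3 : ¬ (3 ∣ k)) : luc k % 2 = 1 := by
  have := luc_even_iff k
  have h3' : k % 3 ≠ 0 := by omega
  omega

lemma gcd_fib_luc (k : ℕ) : Nat.gcd (fib k) (luc k) ∣ 2 := by
  have h1 : Nat.gcd (fib k) (luc k) ∣ fib k := Nat.gcd_dvd_left _ _
  have h2 : Nat.gcd (fib k) (luc k) ∣ luc k := Nat.gcd_dvd_right _ _
  have h3 : Nat.gcd (fib k) (luc k) ∣ 2 * fib (k+1) := by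
    rw [← luc_add_fib]
    exact h2.add h1
  have h4 : Nat.gcd (fib k) (luc k) ∣ 2 * fib k := h1.mul_left 2
  have h5 := Nat.dvd_gcd h4 h3
  rw [Nat.gcd_mul_left] at h5
  have h6 := Nat.fib_coprime_fib_succ k
  unfold Nat.Coprime at h6
  rw [h6, mul_one] at h5
  exact h5

theorem luc_square : ∀ {m b : ℕ}, luc m = b^2 → m = 1 ∨ m = 3 := by
  intro m b h
  rcases Nat.even_or_odd m with he | ho
  · exfalso
    obtain ⟨j, hj⟩ := he
    have hm2 : m = 2 * j := by omega
    have h2 : ((b:ℤ))^2 = ((luc j : ℤ))^2 - 2*(-1)^j := by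
      rw [← luc_two_mulZ, ← hm2, h]
      push_cast
      ring
    rcases Nat.even_or_odd j with hj2 | hj2
    · rw [Even.neg_one_pow hj2] at h2
      have hc := congrArg (fun z : ℤ => (z : ZMod 4)) h2
      push_cast at hc
      revert hc
      generalize ((b : ZMod 4)) = X
      generalize ((luc j : ZMod 4)) = Y
      revert X Y
      decide
    · rw [Odd.neg_one_pow hj2] at h2
      have hc := congrArg (fun z : ℤ => (z : ZMod 4)) h2
      push_cast at hc
      revert hc
      generalize ((b : ZMod 4)) = X
      generalize ((luc j : ZMod 4)) = Y
      revert X Y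
      decide
  · have h4 : m % 4 = 1 ∨ m % 4 = 3 := by
      rcases ho with ⟨r, hr⟩
      omega
    rcases h4 with h4 | h4
    · by_cases hm1 : m = 1
      · exact Or.inl hm1
      exfalso
      obtain ⟨k, t, hkt, ht, hk2, hk3, -, -⟩ := decomp (m-1) (by omega) (by omega)
      have hm : m = 1 + 2*k*t := by omega
      have hmod := iterL hk2 t 1
      rw [← hm, neg_one_pow_odd ht] at hmod
      have hd := hmod.dvd
      have e : (-1 * (luc 1 : ℤ)) - (luc m : ℤ) = -((1:ℕ) * (((b:ℤ))^2 + ((1:ℕ):ℤ)^2)) := by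
        rw [h]
        push_cast [show luc 1 = 1 from rfl]
        ring
      rw [e] at hd
      exact no_sq_dvd (b:ℤ) (luc_mod4_eq3 k hk2 (by omega)) (Nat.coprime_one_left _)
        (Nat.coprime_one_left _) (dvd_neg.mp hd)
    · by_cases hm3 : m = 3
      · exact Or.inr hm3
      exfalso
      obtain ⟨k, t, hkt, ht, hk2, hk3, -, -⟩ := decomp (m-3) (by omega) (by omega)
      have hm : m = 3 + 2*k*t := by omega
      have hmod := iterL hk2 t 3
      rw [← hm, neg_one_pow_odd ht] at hmod
      have hd := hmod.dvd
      have e : (-1 * (luc 3 : ℤ)) - (luc m : ℤ) = -((1:ℕ) * (((b:ℤ))^2 + ((2:ℕ):ℤ)^2)) := by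
        rw [h]
        push_cast [show luc 3 = 4 from rfl]
        ring
      rw [e] at hd
      have hcop2 : Nat.Coprime 2 (luc k) :=
        (Nat.prime_two.coprime_iff_not_dvd).mpr (by have := luc_odd hk3; omega)
      exact no_sq_dvd (b:ℤ) (luc_mod4_eq3 k hk2 (by omega)) (Nat.coprime_one_left _)
        hcop2 (dvd_neg.mp hd)

theorem luc_three_sq {m c : ℕ} (hm4 : m % 4 = 2) (h : luc m = 3*c^2) : m = 2 := by
  by_contra hne
  have h8 : m % 8 = 2 ∨ m % 8 = 6 := by omega
  rcases h8 with h8 | h8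
  · obtain ⟨k, t, hkt, ht, hk2, hk3, h8k, -⟩ := decomp (m-2) (by omega) (by omega)
    have hk4 : 4 ∣ k := h8k (by omega)
    have hm : m = 2 + 2*k*t := by omega
    have hmod := iterL hk2 t 2
    rw [← hm, neg_one_pow_odd ht] at hmod
    have hd := hmod.dvd
    have e : (-1 * (luc 2 : ℤ)) - (luc m : ℤ) = -((3:ℕ) * (((c:ℤ))^2 + ((1:ℕ):ℤ)^2)) := by
      rw [h]
      push_cast [show luc 2 = 3 from rfl]
      ring
    rw [e] at hd
    have hcop3 : Nat.Coprime 3 (luc k) := by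
      refine (Nat.prime_three.coprime_iff_not_dvd).mpr ?_
      intro hdd
      have h0 : luc k % 3 = 0 := by omega
      have := (luc_mod3_iff k).mp h0
      omega
    exact no_sq_dvd (c:ℤ) (luc_mod4_eq3 k hk2 (by omega)) hcop3
      (Nat.coprime_one_left _) (dvd_neg.mp hd)
  · obtain ⟨k, t, hkt, ht, hk2, hk3, h8k, -⟩ := decomp (m+2) (by omega) (by omega)
    have hk4 : 4 ∣ k := h8k (by omega)
    have hk0 : k ≠ 0 := by
      rintro rfl
      simp at hkt
    have ht1 : 1 ≤ t := by omega
    have hodd := luc_odd hk3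
    have hexp : 2*k*t = 2*k*(t-1) + 2*k := by
      calc 2*k*t = 2*k*((t-1)+1) := by rw [Nat.sub_add_cancel ht1]
        _ = 2*k*(t-1) + 2*k := by ring
    have hm : m = (2*k - 2) + 2*k*(t-1) := by omega
    have hstep := iterL hk2 (t-1) (2*k-2)
    rw [← hm, neg_one_pow_even (by omega), one_mul] at hstep
    have hrefl := reflL hk2 hodd (j := 2) (by omega)
    have hmod := hstep.trans hrefl
    have hd := hmod.dvd
    have e : (-((-1)^2 * (luc 2 : ℤ))) - (luc m : ℤ) = -((3:ℕ) * (((c:ℤ))^2 + ((1:ℕ):ℤ)^2)) := by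
      rw [h]
      push_cast [show luc 2 = 3 from rfl]
      ring
    rw [e] at hd
    have hcop3 : Nat.Coprime 3 (luc k) := by
      refine (Nat.prime_three.coprime_iff_not_dvd).mpr ?_
      intro hdd
      have h0 : luc k % 3 = 0 := by omega
      have := (luc_mod3_iff k).mp h0
      omega
    exact no_sq_dvd (c:ℤ) (luc_mod4_eq3 k hk2 (by omega)) hcop3
      (Nat.coprime_one_left _) (dvd_neg.mp hd)

end LucSq
section LucTwoSq

lemma sq_ne_two (d : ℕ) : d^2 ≠ 2 := by
  match d with
  | 0 => norm_num
  | 1 => norm_num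
  | d + 2 =>
      have h : (d+2)^2 = d^2 + 4*d + 4 := by ring
      omega

theorem luc_two_sq {n b : ℕ} (h : luc n = 2*b^2) : n = 0 ∨ n = 6 := by
  have h3n : n % 3 = 0 := by
    have heven : luc n % 2 = 0 := by omega
    have := (luc_even_iff n).mp heven
    omega
  obtain ⟨m, hnm⟩ : ∃ m, n = 3*m := ⟨n/3, by omega⟩
  have hz : (2:ℤ)*((b:ℤ))^2 = ((luc m : ℤ))^3 - 3*(-1)^m*(luc m) := by
    rw [← luc_three_mulZ, ← hnm, h]
    push_cast
    ring
  have hu1 : 1 ≤ luc m := luc_pos m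
  by_cases hm42 : m % 4 = 2
  · have h3u : luc m % 3 = 0 := (luc_mod3_iff m).mpr (by omega)
    obtain ⟨v, hv⟩ : ∃ v, luc m = 3*v := ⟨luc m / 3, by omega⟩
    have hv1 : 1 ≤ v := by omega
    have hmeven : ((-1:ℤ))^m = 1 := neg_one_pow_even (by omega)
    rw [hmeven, hv] at hz
    push_cast at hz
    have h3b : 3 ∣ b := by
      have h9 : (9:ℤ) ∣ 2*((b:ℤ))^2 := ⟨3*(v:ℤ)^3 - v, by linarith [hz]⟩
      have h9n : (9:ℕ) ∣ 2*b^2 := by exact_mod_cast h9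
      have h3sq : (3:ℕ) ∣ b^2 := by omega
      exact Nat.Prime.dvd_of_dvd_pow Nat.prime_three h3sq
    obtain ⟨b1, hb1⟩ := h3b
    rw [hb1] at hz
    push_cast at hz
    have hnat : v * (3*v^2 - 1) = 2*b1^2 := by
      have hzz2 : ((v:ℤ) * (3*(v:ℤ)^2 - 1)) = 2*(b1:ℤ)^2 := by nlinarith [hz]
      have hcast : ((v * (3*v^2 - 1) : ℕ) : ℤ) = (v:ℤ) * (3*(v:ℤ)^2 - 1) := by
        push_cast [Nat.cast_sub (by nlinarith : 1 ≤ 3*v^2)]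
        ring
      exact_mod_cast hcast.trans hzz2
    have hcop : Nat.Coprime v (3*v^2 - 1) := by
      have hd1 : Nat.gcd v (3*v^2-1) ∣ v := Nat.gcd_dvd_left _ _
      have hd2 : Nat.gcd v (3*v^2-1) ∣ 3*v^2-1 := Nat.gcd_dvd_right _ _
      have hd3 : Nat.gcd v (3*v^2-1) ∣ 3*v*v := hd1.mul_left (3*v)
      rw [show 3*v*v = 3*v^2 from by ring] at hd3
      have hd4 := Nat.dvd_sub hd3 hd2
      rw [show 3*v^2 - (3*v^2 - 1) = 1 from by
        have h1 : 1 ≤ 3*v^2 := by nlinarith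
        omega] at hd4
      exact Nat.dvd_one.mp hd4
    rcases SQ2 hcop hnat with ⟨a, e, hva, h3v⟩ | ⟨a, e, hva, h3v⟩
    · right
      have hm2 := luc_three_sq hm42 (show luc m = 3*a^2 from by rw [hv, hva])
      omega
    · exfalso
      have hsub : 1 ≤ 3*v^2 := by nlinarith
      have hde : e^2 + 1 = 3*v^2 := by omega
      have hdvd3 : (3:ℕ) ∣ e^2 + 1 := ⟨v^2, by omega⟩
      have hdz : (3:ℤ) ∣ ((1:ℕ):ℤ) * (((e:ℤ))^2 + ((1:ℕ):ℤ)^2) := by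
        obtain ⟨w, hw⟩ := hdvd3
        have hwz : ((e:ℤ))^2 + 1 = 3*(w:ℤ) := by exact_mod_cast hw
        exact ⟨(w:ℤ), by push_cast; linarith⟩
      exact no_sq_dvd (e:ℤ) (show (3:ℕ)%4 = 3 from rfl) (Nat.coprime_one_left _)
        (Nat.coprime_one_left _) hdz
  · have h3u : ¬ (3 ∣ luc m) := by
      intro hdd
      have h0 : luc m % 3 = 0 := by omega
      have := (luc_mod3_iff m).mp h0
      omega
    rcases Nat.even_or_odd m with hme | hmo
    · have hmeven : ((-1:ℤ))^m = 1 := neg_one_pow_even (Nat.even_iff.mp hme)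
      rw [hmeven] at hz
      have hm1 : m ≠ 1 := by
        rintro rfl
        exact (by decide : ¬ Even 1) hme
      have hu2 : 2 ≤ luc m := by
        match m, hm1 with
        | 0, _ => norm_num [luc]
        | 1, hm1 => exact absurd rfl hm1
        | (m+2), _ =>
            have := luc_ge (m+2) (by omega)
            omega
      have hsub : 3 ≤ (luc m)^2 := by nlinarith
      have hnat : (luc m) * ((luc m)^2 - 3) = 2*b^2 := by
        have hcast : (((luc m) * ((luc m)^2 - 3) : ℕ) : ℤ) = ((luc m):ℤ)^3 - 3*((luc m):ℤ) := by
          push_cast [Nat.cast_sub hsub]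
          ring
        have h2 : (((luc m) * ((luc m)^2-3) : ℕ):ℤ) = 2*((b:ℤ))^2 := by
          rw [hcast]; linarith [hz]
        exact_mod_cast h2
      have hcop : Nat.Coprime (luc m) ((luc m)^2 - 3) := by
        have hd1 : Nat.gcd (luc m) ((luc m)^2-3) ∣ (luc m) := Nat.gcd_dvd_left _ _
        have hd2 : Nat.gcd (luc m) ((luc m)^2-3) ∣ (luc m)^2-3 := Nat.gcd_dvd_right _ _
        have hd3 : Nat.gcd (luc m) ((luc m)^2-3) ∣ (luc m)*(luc m) := hd1.mul_left (luc m)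
        rw [show (luc m)*(luc m) = (luc m)^2 from (sq (luc m)).symm] at hd3
        have hd4 := Nat.dvd_sub hd3 hd2
        rw [show (luc m)^2 - ((luc m)^2 - 3) = 3 from by omega] at hd4
        rcases (Nat.dvd_prime Nat.prime_three).mp hd4 with h1 | h1
        · exact h1
        · exact absurd (h1 ▸ hd1) h3u
      rcases SQ2 hcop hnat with ⟨a, e, hua, h3v⟩ | ⟨a, e, hua, h3v⟩
      · exfalso
        rcases luc_square hua with h1 | h1 <;>
          (have := Nat.even_iff.mp hme; omega)
      · left
        have he2 : e^2 + 3 = (luc m)^2 := by omega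
        have helt : e < luc m := by
          by_contra hle
          have hle2 := Nat.pow_le_pow_left (show luc m ≤ e by omega) 2
          omega
        obtain ⟨w, hw⟩ : ∃ w, luc m = w + 1 := ⟨luc m - 1, by omega⟩
        have hew : e ≤ w := by omega
        have hee := Nat.pow_le_pow_left hew 2
        rw [hw] at he2
        rw [show (w+1)^2 = w^2 + 2*w + 1 from by ring] at he2
        have hu2e : luc m = 2 := by omega
        have hm0 : m = 0 := luc_eq_two hu2e
        omega
    · have hmodd : ((-1:ℤ))^m = -1 := neg_one_pow_odd (Nat.odd_iff.mp hmo)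
      rw [hmodd] at hz
      have hnat : (luc m) * ((luc m)^2 + 3) = 2*b^2 := by
        have h2 : (((luc m) * ((luc m)^2+3) : ℕ):ℤ) = 2*((b:ℤ))^2 := by
          push_cast
          linarith [hz]
        exact_mod_cast h2
      have hcop : Nat.Coprime (luc m) ((luc m)^2 + 3) := by
        have hd1 : Nat.gcd (luc m) ((luc m)^2+3) ∣ (luc m) := Nat.gcd_dvd_left _ _
        have hd2 : Nat.gcd (luc m) ((luc m)^2+3) ∣ (luc m)^2+3 := Nat.gcd_dvd_right _ _
        have hd3 : Nat.gcd (luc m) ((luc m)^2+3) ∣ (luc m)*(luc m) := hd1.mul_left (luc m)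
        rw [show (luc m)*(luc m) = (luc m)^2 from (sq (luc m)).symm] at hd3
        have hd4 := Nat.dvd_sub hd2 hd3
        rw [show (luc m)^2 + 3 - (luc m)^2 = 3 from by omega] at hd4
        rcases (Nat.dvd_prime Nat.prime_three).mp hd4 with h1 | h1
        · exact h1
        · exact absurd (h1 ▸ hd1) h3u
      rcases SQ2 hcop hnat with ⟨a, e, hua, h3v⟩ | ⟨a, e, hua, h3v⟩
      · exfalso
        rcases luc_square hua with h1 | h1
        · rw [h1] at h3v
          norm_num [show luc 1 = 1 from rfl] at h3v
          have he2 : e^2 = 2 := by omega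
          exact sq_ne_two e he2
        · rw [h1] at h3v
          norm_num [show luc 3 = 4 from rfl] at h3v
          omega
      · exfalso
        have helt : luc m < e := by
          by_contra hle
          have hle2 := Nat.pow_le_pow_left (show e ≤ luc m by omega) 2
          omega
        have hge : luc m + 1 ≤ e := by omega
        have hee := Nat.pow_le_pow_left hge 2
        rw [show ((luc m)+1)^2 = (luc m)^2 + 2*(luc m) + 1 from by ring] at hee
        have hule : luc m = 1 := by omega
        rw [hule] at hua
        omega

end LucTwoSq
theorem stmt7 (n x : ℕ) (hx : 1 ≤ x) (h : Nat.fib n = 5 * x ^ 2) : n = 5 ∧ x = 1 := by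
  have h5n : 5 ∣ n := five_dvd_fib n ⟨x^2, h⟩
  have hn0 : n ≠ 0 := by
    rintro rfl
    rw [show fib 0 = 0 from rfl] at h
    nlinarith
  rcases Nat.even_or_odd n with he | ho
  · -- n even
    exfalso
    obtain ⟨m, hm⟩ := he
    have hn2m : n = 2*m := by omega
    have hm0 : m ≠ 0 := by omega
    have hprod : fib m * luc m = 5 * x^2 := by
      rw [← fib_two_mul_luc, ← hn2m, h]
    have h5L : ¬ (5 ∣ luc m) := by
      intro hd
      have := luc_mod5 m
      omega
    have h5F : 5 ∣ fib m := by
      have h5p : (5:ℕ) ∣ fib m * luc m := ⟨x^2, hprod⟩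
      rcases (Nat.Prime.dvd_mul (by norm_num)).mp h5p with h1 | h1
      · exact h1
      · exact absurd h1 h5L
    by_cases h3m : 3 ∣ m
    · -- both even
      have hfe : fib m % 2 = 0 := (fib_even_iff m).mpr (by omega)
      have hle : luc m % 2 = 0 := (luc_even_iff m).mpr (by omega)
      obtain ⟨f, hf⟩ : ∃ f, fib m = 2*f := ⟨fib m / 2, by omega⟩
      obtain ⟨l, hl⟩ : ∃ l, luc m = 2*l := ⟨luc m / 2, by omega⟩
      have hprod4 : 4 * (f * l) = 5 * x^2 := by
        rw [← hprod, hf, hl]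
        ring
      have h2x : 2 ∣ x := by
        have h2sq : 2 ∣ x^2 := by omega
        exact Nat.Prime.dvd_of_dvd_pow Nat.prime_two h2sq
      obtain ⟨x1, hx1⟩ := h2x
      have hprod1 : f * l = 5 * x1^2 := by
        have : 4*(f*l) = 4*(5*x1^2) := by
          rw [hprod4, hx1]
          ring
        omega
      have hcopfl : Nat.Coprime f l := by
        have hg := gcd_fib_luc m
        rw [hf, hl, Nat.gcd_mul_left] at hg
        have := (Nat.mul_dvd_mul_iff_left (show 0 < 2 by norm_num)).mp
          (by simpa using hg : 2 * Nat.gcd f l ∣ 2 * 1)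
        exact Nat.dvd_one.mp this
      have h5f : 5 ∣ f := by
        have h5p : (5:ℕ) ∣ f * l := ⟨x1^2, hprod1⟩
        rcases (Nat.Prime.dvd_mul (by norm_num)).mp h5p with h1 | h1
        · exact h1
        · exfalso
          exact h5L (hl ▸ h1.mul_left 2)
      obtain ⟨a, b2, hfa, hlb⟩ := SQ5 hcopfl hprod1 h5f
      have hluc2 : luc m = 2*b2^2 := by rw [hl, hlb]
      rcases luc_two_sq hluc2 with h1 | h1
      · exact hm0 h1
      · rw [h1] at hf
        rw [show fib 6 = 8 from rfl] at hf
        have hfv : f = 4 := by omega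
        rw [hfv] at hfa
        omega
    · -- coprime case
      have hcop : Nat.Coprime (fib m) (luc m) := by
        rcases (Nat.dvd_prime Nat.prime_two).mp (gcd_fib_luc m) with h1 | h1
        · exact h1
        · exfalso
          have h2f : 2 ∣ fib m := h1 ▸ Nat.gcd_dvd_left _ _
          have := (fib_even_iff m).mp (by omega)
          omega
      obtain ⟨a, b2, hfa, hlb⟩ := SQ5 hcop hprod h5F
      rcases luc_square hlb with h1 | h1
      · rw [h1] at hfa
        rw [show fib 1 = 1 from rfl] at hfa
        omega
      · rw [h1] at h3m
        omega
  · -- n odd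
    have hodd2 : n % 2 = 1 := Nat.odd_iff.mp ho
    by_cases hn5 : n = 5
    · refine ⟨hn5, ?_⟩
      rw [hn5, show fib 5 = 5 from rfl] at h
      have hx2 : x^2 = 1 := by omega
      nlinarith
    · exfalso
      have hge : 15 ≤ n := by omega
      rcases (by omega : n % 4 = 1 ∨ n % 4 = 3) with h41 | h43
      · obtain ⟨k, t, hkt, ht, hk2, hk3, -, -⟩ := decomp (n-5) (by omega) (by omega)
        have hm : n = 5 + 2*k*t := by omega
        have hmod := iterF hk2 t 5
        rw [← hm, neg_one_pow_odd ht] at hmod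
        have hd := hmod.dvd
        have e : (-1 * (fib 5 : ℤ)) - (fib n : ℤ) = -((5:ℕ) * (((x:ℤ))^2 + ((1:ℕ):ℤ)^2)) := by
          rw [h]
          push_cast [show fib 5 = 5 from rfl]
          ring
        rw [e] at hd
        have hcop5 : Nat.Coprime 5 (luc k) :=
          (Nat.Prime.coprime_iff_not_dvd (by norm_num)).mpr (by
            intro hdd
            have := luc_mod5 k
            omega)
        exact no_sq_dvd (x:ℤ) (luc_mod4_eq3 k hk2 (by omega)) hcop5
          (Nat.coprime_one_left _) (dvd_neg.mp hd)
      · obtain ⟨k, t, hkt, ht, hk2, hk3, -, hk2eq⟩ := decomp (n+5) (by omega) (by omega)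
        by_cases hkk : k = 2
        · -- corner: n % 8 = 7, work mod 3
          have hN8 : (n+5) % 8 = 4 := hk2eq hkk
          have hf3 : fib n % 3 = 1 := fib_mod3_seven n (by omega)
          have hx3 : x^2 % 3 = 2 := by omega
          have hdvd3 : (3:ℕ) ∣ x^2 + 1 := by omega
          have hdz : (3:ℤ) ∣ ((1:ℕ):ℤ) * (((x:ℤ))^2 + ((1:ℕ):ℤ)^2) := by
            obtain ⟨w, hw⟩ := hdvd3
            have hwz : ((x:ℤ))^2 + 1 = 3*(w:ℤ) := by exact_mod_cast hw
            exact ⟨(w:ℤ), by push_cast; linarith⟩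
          exact no_sq_dvd (x:ℤ) (show (3:ℕ)%4 = 3 from rfl) (Nat.coprime_one_left _)
            (Nat.coprime_one_left _) hdz
        · have hk0 : k ≠ 0 := by
            rintro rfl
            simp at hkt
          have hk4 : 4 ≤ k := by omega
          have ht1 : 1 ≤ t := by omega
          have hlodd := luc_odd hk3
          have hexp : 2*k*t = 2*k*(t-1) + 2*k := by
            calc 2*k*t = 2*k*((t-1)+1) := by rw [Nat.sub_add_cancel ht1]
              _ = 2*k*(t-1) + 2*k := by ring
          have hm : n = (2*k - 5) + 2*k*(t-1) := by omega
          have hstep := iterF hk2 (t-1) (2*k-5)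
          rw [← hm, neg_one_pow_even (by omega), one_mul] at hstep
          have hrefl := reflF hk2 hlodd (j := 5) (by omega)
          have hmod := hstep.trans hrefl
          have hd := hmod.dvd
          have e : ((-1)^5 * (fib 5 : ℤ)) - (fib n : ℤ) = -((5:ℕ) * (((x:ℤ))^2 + ((1:ℕ):ℤ)^2)) := by
            rw [h]
            push_cast [show fib 5 = 5 from rfl]
            ring
          rw [e] at hd
          have hcop5 : Nat.Coprime 5 (luc k) :=
            (Nat.Prime.coprime_iff_not_dvd (by norm_num)).mpr (by
              intro hdd
              have := luc_mod5 k
              omega)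
          exact no_sq_dvd (x:ℤ) (luc_mod4_eq3 k hk2 (by omega)) hcop5
            (Nat.coprime_one_left _) (dvd_neg.mp hd)
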